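/- If u ∈ V admits a decomposition u = Σᵢ zᵢ with zᵢ ∈ Wᵢ for each i and Σᵢ ‖zᵢ‖² ≤ C₀·‖u‖², then ‖u‖² ≤ C₀·⟨Σᵢ Pᵢ u, u⟩. -/

import Mathlib

open RealInnerProductSpace

/-- Let `V` be a finite-dimensional real inner product space, `(Wᵢ)` a finite family of
subspaces with orthogonal projections `Pᵢ`, and `C₀ > 0`.  If `u = Σᵢ zᵢ` with
`zᵢ ∈ Wᵢ` and `Σᵢ ‖zᵢ‖² ≤ C₀·‖u‖²`, then `‖u‖² ≤ C₀·⟨Σᵢ Pᵢ u, u⟩`. -/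
theorem stmt_13 {V : Type*} [NormedAddCommGroup V] [InnerProductSpace ℝ V]
    [FiniteDimensional ℝ V]
    {ι : Type*} [Fintype ι] (W : ι → Submodule ℝ V)
    (C₀ : ℝ) (hC₀ : 0 < C₀)
    (u : V) (z : ι → V) (hz : ∀ i, z i ∈ W i) (hdecomp : u = ∑ i, z i)
    (hstable : ∑ i, ‖z i‖ ^ 2 ≤ C₀ * ‖u‖ ^ 2) :
    ‖u‖ ^ 2 ≤ C₀ * ⟪∑ i, (((W i).orthogonalProjection u : V)), u⟫ := by
  set S : ℝ := ⟪∑ i, (((W i).orthogonalProjection u : V)), u⟫ with hS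
  have hSsum : S = ∑ i, ‖((W i).orthogonalProjection u : V)‖ ^ 2 := by
    rw [hS, sum_inner]
    refine Finset.sum_congr rfl fun i _ => ?_
    rw [← real_inner_self_eq_norm_sq, ← Submodule.coe_inner,
      Submodule.inner_orthogonalProjection_eq_of_mem_left]
  have hSnn : 0 ≤ S := by
    rw [hSsum]; exact Finset.sum_nonneg fun i _ => sq_nonneg _
  by_cases hu : u = 0
  · simp [hu]
    positivity
  · have hun : (0:ℝ) < ‖u‖ ^ 2 := pow_pos (norm_pos_iff.mpr hu) 2
    -- ‖u‖² = ∑ ⟪z i, P i u⟫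
    have key : ‖u‖ ^ 2 = ∑ i, ⟪z i, ((W i).orthogonalProjection u : V)⟫ := by
      have h1 : ∀ i, ⟪z i, ((W i).orthogonalProjection u : V)⟫ = ⟪z i, u⟫ := fun i => by
        have h := Submodule.inner_orthogonalProjection_eq_of_mem_left (K := W i) (⟨z i, hz i⟩ : W i) u
        rwa [Submodule.coe_inner] at h
      simp_rw [h1]
      rw [← sum_inner, ← hdecomp, real_inner_self_eq_norm_sq]
    have step1 : ‖u‖ ^ 2 ≤ ∑ i, ‖z i‖ * ‖((W i).orthogonalProjection u : V)‖ := by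
      rw [key]
      exact Finset.sum_le_sum fun i _ => real_inner_le_norm _ _
    have cs := Finset.sum_mul_sq_le_sq_mul_sq Finset.univ (fun i => ‖z i‖)
      (fun i => ‖((W i).orthogonalProjection u : V)‖)
    have h4 : (‖u‖ ^ 2) ^ 2 ≤ (C₀ * ‖u‖ ^ 2) * S := by
      calc (‖u‖ ^ 2) ^ 2 ≤ (∑ i, ‖z i‖ * ‖((W i).orthogonalProjection u : V)‖) ^ 2 := by
            apply pow_le_pow_left₀ hun.le step1
        _ ≤ (∑ i, ‖z i‖ ^ 2) * ∑ i, ‖((W i).orthogonalProjection u : V)‖ ^ 2 := cs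
        _ ≤ (C₀ * ‖u‖ ^ 2) * S := by
            rw [← hSsum]
            exact mul_le_mul_of_nonneg_right hstable hSnn
    nlinarith [h4, hun]
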